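/- For all j ≥ 1, the position of the j-th occurrence of the letter B in the golden string S equals ⌊jφ⌋, where φ = (1+√5)/2. -/

import Mathlib

/-- The finite golden strings: `gs 1 = [B]`, `gs 2 = [B, A]`, `gs n = gs (n-1) ++ gs (n-2)`.
Here `true` denotes the letter B and `false` denotes the letter A. -/
def gs : ℕ → List Bool
  | 0 => []
  | 1 => [true]
  | 2 => [true, false]
  | (n+3) => gs (n+2) ++ gs (n+1)

/-- The `i`-th letter (1-indexed) of the infinite golden string `S`;
`true` = B, `false` = A.  Since `gs n` is a prefix of `gs (n+1)` and
`(gs (i+1)).length = F (i+2) ≥ i`, this is well-defined. -/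
def goldenLetter (i : ℕ) : Bool := (gs (i+1)).getD (i-1) true

/-- `s` is the (index set of the) Zeckendorf decomposition of `n`:
a set of indices `≥ 2`, no two adjacent, with `n = ∑_{i ∈ s} F i`. -/
def IsZeck (n : ℕ) (s : Finset ℕ) : Prop :=
  (∀ i ∈ s, 2 ≤ i) ∧ (∀ i ∈ s, i + 1 ∉ s) ∧ n = ∑ i ∈ s, Nat.fib i

/-- `c` is the coefficient function of the Chung–Graham decomposition of `n`:
`n = ∑_{i ≥ 1} c i * F (2i)` with `c i ∈ {0,1,2}` and a coefficient `0`
strictly between any two coefficients equal to `2`. -/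
def IsCG (n : ℕ) (c : ℕ →₀ ℕ) : Prop :=
  (∀ i, c i ≤ 2) ∧ c 0 = 0 ∧
  (∀ i₁ i₂, i₁ < i₂ → c i₁ = 2 → c i₂ = 2 → ∃ j, i₁ < j ∧ j < i₂ ∧ c j = 0) ∧
  n = c.sum (fun i a => a * Nat.fib (2 * i))

/-- `n` has `F (2k)` as the smallest summand of its Zeckendorf decomposition. -/
def ZeckMin (k n : ℕ) : Prop :=
  ∃ s : Finset ℕ, IsZeck n s ∧ 2 * k ∈ s ∧ ∀ i ∈ s, 2 * k ≤ i

/-- `n` has `F (2k)` or `2 F (2k)` as the smallest summand of its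
Chung–Graham decomposition. -/
def CGMin (k n : ℕ) : Prop :=
  ∃ c : ℕ →₀ ℕ, IsCG n c ∧ 1 ≤ c k ∧ ∀ i < k, c i = 0

theorem gs_length : ∀ n, (gs (n+1)).length = Nat.fib (n+2)
  | 0 => rfl
  | 1 => rfl
  | (n+2) => by
    show (gs (n+2) ++ gs (n+1)).length = Nat.fib (n+4)
    rw [List.length_append, gs_length (n+1), gs_length n]
    have h := Nat.fib_add_two (n := n+2)
    rw [show n+1+2 = n+3 from rfl, show n+2+2 = n+4 from rfl, show n+2+1 = n+3 from rfl] at *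
    omega

theorem gs_prefix_succ : ∀ n, gs (n+1) <+: gs (n+2)
  | 0 => ⟨[false], rfl⟩
  | (n+1) => by rw [show n+1+2 = n+3 from rfl, gs]; exact List.prefix_append _ _

theorem gs_prefix {n m : ℕ} (h : n ≤ m) : gs (n+1) <+: gs (m+1) := by
  induction m with
  | zero => rw [Nat.le_zero.mp h]
  | succ m ih =>
    rcases Nat.lt_or_ge n (m+1) with h' | h'
    · exact (ih (Nat.lt_succ_iff.mp h')).trans (gs_prefix_succ m)
    · rw [Nat.le_antisymm h h']

theorem le_fib_add_two : ∀ n, n + 1 ≤ Nat.fib (n+2)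
  | 0 => le_refl 1
  | (n+1) => by
    rw [show n+1+2 = (n+1)+2 from rfl, Nat.fib_add_two]
    have h1 : 0 < Nat.fib (n+1) := Nat.fib_pos.mpr (Nat.succ_pos n)
    have := le_fib_add_two n
    rw [show n+1+1 = n+2 from rfl]
    omega

theorem goldenLetter_eq {n i : ℕ} (h1 : 1 ≤ i) (h2 : i ≤ Nat.fib (n+2)) :
    goldenLetter i = (gs (n+1)).getD (i-1) true := by
  unfold goldenLetter
  have hi : i - 1 < (gs (i+1)).length := by
    rw [show i + 1 = (i-1)+1+1 by omega, gs_length, show i-1+1+2 = i-1+3 from rfl]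
    have := le_fib_add_two (i-1+1)
    rw [show i-1+1+2 = i-1+3 from rfl] at this
    omega
  have hn : i - 1 < (gs (n+1)).length := by rw [gs_length]; omega
  rcases Nat.le_total i n with h | h
  · have hp : gs (i+1) <+: gs (n+1) := gs_prefix h
    rw [List.getD_eq_getElem _ _ hi, List.getD_eq_getElem _ _ hn, hp.getElem hi]
  · have hp : gs (n+1) <+: gs (i+1) := gs_prefix h
    rw [List.getD_eq_getElem _ _ hi, List.getD_eq_getElem _ _ hn, hp.getElem hn]

theorem goldenLetter_step {m i : ℕ} (hm : 3 ≤ m) (h1 : Nat.fib m < i) (h2 : i ≤ Nat.fib (m+1)) :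
    goldenLetter i = goldenLetter (i - Nat.fib m) := by
  obtain ⟨k, rfl⟩ : ∃ k, m = k + 3 := ⟨m - 3, by omega⟩
  rw [show k+3+1 = k+4 from rfl] at h2
  have hfib : Nat.fib (k+4) = Nat.fib (k+2) + Nat.fib (k+3) := by
    have := Nat.fib_add_two (n := k+2)
    rw [show k+2+2 = k+4 from rfl, show k+2+1 = k+3 from rfl] at this
    omega
  have hpos3 : 1 ≤ Nat.fib (k+3) := Nat.fib_pos.mpr (by omega)
  have hi1 : 1 ≤ i := by omega
  have e1 : goldenLetter i = (gs (k+3)).getD (i-1) true := by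
    have := goldenLetter_eq (n := k+2) hi1 (by rw [show k+2+2 = k+4 from rfl]; omega)
    rwa [show k+2+1 = k+3 from rfl] at this
  have e2 : goldenLetter (i - Nat.fib (k+3)) = (gs (k+1)).getD (i - Nat.fib (k+3) - 1) true := by
    exact goldenLetter_eq (n := k) (by omega) (by omega)
  rw [e1, e2, show gs (k+3) = gs (k+2) ++ gs (k+1) from rfl]
  rw [List.getD_append_right]
  · congr 1
    rw [gs_length (k+1), show k+1+2 = k+3 from rfl]
    omega
  · rw [gs_length (k+1), show k+1+2 = k+3 from rfl]
    omega

noncomputable def psi : ℝ := (Real.sqrt 5 - 1) / 2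

theorem sqrt5_sq : Real.sqrt 5 ^ 2 = 5 := Real.sq_sqrt (by norm_num)

theorem sqrt5_gt : (2:ℝ) < Real.sqrt 5 := by
  nlinarith [sqrt5_sq, Real.sqrt_nonneg 5]

theorem sqrt5_lt : Real.sqrt 5 < 2.5 := by
  nlinarith [sqrt5_sq, Real.sqrt_nonneg 5]

theorem psi_half : (1:ℝ)/2 < psi := by unfold psi; nlinarith [sqrt5_gt]

theorem psi_pos : 0 < psi := lt_trans (by norm_num) psi_half

theorem psi_lt : psi < 3/4 := by unfold psi; nlinarith [sqrt5_lt]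

theorem psi_lt_one : psi < 1 := lt_trans psi_lt (by norm_num)

theorem psi_sq : psi^2 = 1 - psi := by unfold psi; nlinarith [sqrt5_sq]

theorem fib_mul_psi : ∀ m, (Nat.fib (m+1) : ℝ) * psi = Nat.fib m - (-psi)^(m+1)
  | 0 => by simp
  | 1 => by
    have := psi_sq
    simp only [Nat.fib_one, Nat.fib_two, Nat.cast_one]
    rw [show (1:ℕ)+1 = 2 from rfl]
    rw [neg_pow]
    norm_num
    linarith
  | (m+2) => by
    have h1 := fib_mul_psi m
    have h2 := fib_mul_psi (m+1)
    have hf : (Nat.fib (m+3) : ℝ) = Nat.fib (m+1) + Nat.fib (m+2) := by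
      have := Nat.fib_add_two (n := m+1)
      rw [show m+1+2 = m+3 from rfl, show m+1+1 = m+2 from rfl] at this
      rw [this]; push_cast; ring
    have hf2 : (Nat.fib (m+2) : ℝ) = Nat.fib m + Nat.fib (m+1) := by
      have := Nat.fib_add_two (n := m)
      rw [this]; push_cast; ring
    have hpow : (-psi)^(m+1) + (-psi)^(m+2) = (-psi)^(m+3) := by
      have e : (-psi)^(m+3) = (-psi)^(m+1) * psi^2 := by ring
      rw [e, psi_sq]; ring
    rw [show m+2+1 = m+3 from rfl, hf, show m+1+1 = m+2 from rfl]
    rw [show m+2 = m+1+1 from rfl] at h2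
    nlinarith [h1, h2, hf2, hpow]

theorem psi_pow_le {a b : ℕ} (h : a ≤ b) : psi^b ≤ psi^a :=
  pow_le_pow_of_le_one psi_pos.le psi_lt_one.le h

theorem ba : ∀ m, ∀ y : ℕ, 1 ≤ y → y ≤ Nat.fib (m+2) → ∀ p : ℤ,
    psi^(m+2) ≤ |(y : ℝ) * psi - p|
  | 0 => by
    intro y hy1 hy2 p
    have hy : y = 1 := by simpa using le_antisymm hy2 hy1
    subst hy
    push_cast
    rw [one_mul]
    rcases le_or_gt p 0 with hp | hp
    · have : (p:ℝ) ≤ 0 := by exact_mod_cast hp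
      rw [abs_of_nonneg (by linarith [psi_pos])]
      nlinarith [psi_sq, psi_half]
    · have : (1:ℝ) ≤ p := by exact_mod_cast hp
      rw [abs_of_nonpos (by linarith [psi_lt_one])]
      nlinarith [psi_sq, psi_lt_one]
  | 1 => by
    intro y hy1 hy2 p
    have h3 : psi^3 = 2*psi - 1 := by nlinarith [psi_sq]
    interval_cases y
    · push_cast
      rw [one_mul]
      rcases le_or_gt p 0 with hp | hp
      · have : (p:ℝ) ≤ 0 := by exact_mod_cast hp
        rw [abs_of_nonneg (by linarith [psi_pos])]
        nlinarith [psi_sq, psi_half, psi_lt_one]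
      · have : (1:ℝ) ≤ p := by exact_mod_cast hp
        rw [abs_of_nonpos (by linarith [psi_lt_one])]
        nlinarith [psi_sq, psi_lt_one, psi_half]
    · push_cast
      rcases le_or_gt p 1 with hp | hp
      · have : (p:ℝ) ≤ 1 := by exact_mod_cast hp
        have : psi^3 ≤ 2*psi - p := by linarith [h3]
        exact this.trans (le_abs_self _)
      · have : (2:ℝ) ≤ p := by exact_mod_cast hp
        have h : psi^3 ≤ -(2*psi - p) := by nlinarith [psi_lt]
        exact h.trans (neg_le_abs _)
  | (m+2) => by
    intro y hy1 hy2 p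
    have hfib : Nat.fib (m+4) = Nat.fib (m+2) + Nat.fib (m+3) := by
      have := Nat.fib_add_two (n := m+2)
      rw [show m+2+2 = m+4 from rfl, show m+2+1 = m+3 from rfl] at this
      omega
    rcases le_or_gt y (Nat.fib (m+3)) with hc | hc
    · have := ba (m+1) y hy1 (by rw [show m+1+2 = m+3 from rfl]; exact hc) p
      rw [show m+1+2 = m+3 from rfl] at this
      exact (psi_pow_le (by omega)).trans this
    · rw [show m+2+2 = m+4 from rfl] at hy2 ⊢
      set y' := Nat.fib (m+4) - y with hy'def
      have hy'lt : y' < Nat.fib (m+2) := by omega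
      have hkey : (y:ℝ) * psi = Nat.fib (m+3) - (-psi)^(m+4) - y' * psi := by
        have hc : (y:ℝ) = (Nat.fib (m+4) : ℝ) - y' := by
          have : y + y' = Nat.fib (m+4) := by omega
          push_cast [← this]; ring
        have hfm := fib_mul_psi (m+3)
        rw [show m+3+1 = m+4 from rfl] at hfm
        rw [hc]; nlinarith [hfm]
      have habs : |(-psi)^(m+4)| = psi^(m+4) := by
        rw [abs_pow, abs_neg, abs_of_nonneg psi_pos.le]
      have hps : psi^(m+4) = psi^(m+2) * psi^2 := by ring
      have hsq2 : psi^2 ≤ 1/2 := by nlinarith [psi_sq, psi_half]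
      have hp2pos : (0:ℝ) < psi^(m+2) := pow_pos psi_pos _
      rcases Nat.eq_zero_or_pos y' with hz | hz
      · -- y' = 0
        set q : ℤ := (Nat.fib (m+3) : ℤ) - p with hq
        have e : (y:ℝ)*psi - p = (q:ℝ) - (-psi)^(m+4) := by
          rw [hkey, hz, hq]; push_cast; ring
        rw [e]
        rcases eq_or_ne q 0 with h0 | h0
        · rw [h0]
          rw [Int.cast_zero, zero_sub, abs_neg, habs]
        · have h1 : (1:ℝ) ≤ |(q:ℝ)| := by
            rw [← Int.cast_abs]
            exact_mod_cast Int.one_le_abs h0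
          have t := abs_sub_abs_le_abs_sub (q:ℝ) ((-psi)^(m+4))
          rw [habs] at t
          have hle : psi^(m+4) ≤ psi^2 := psi_pow_le (by omega)
          nlinarith
      · -- y' ≥ 1
        have hb := ba m y' hz (le_of_lt hy'lt) ((Nat.fib (m+3) : ℤ) - p)
        have hqc : (((Nat.fib (m+3) : ℤ) - p : ℤ):ℝ) = ((Nat.fib (m+3)):ℝ) - p := by
          push_cast; ring
        rw [hqc] at hb
        have e : (y:ℝ)*psi - p = (((Nat.fib (m+3)):ℝ) - (p:ℝ) - (y':ℝ)*psi) - (-psi)^(m+4) := by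
          rw [hkey]; ring
        rw [e]
        have t1 := abs_sub_abs_le_abs_sub (((Nat.fib (m+3)):ℝ) - (p:ℝ) - (y':ℝ)*psi) ((-psi)^(m+4))
        rw [habs] at t1
        have t3 : |((Nat.fib (m+3):ℝ)) - (p:ℝ) - (y':ℝ)*psi|
            = |(y':ℝ)*psi - (((Nat.fib (m+3)):ℝ) - (p:ℝ))| := abs_sub_comm _ _
        nlinarith [hb, t1, t3, hps, hsq2, hp2pos]

theorem psi_cube : psi^3 = 2*psi - 1 := by nlinarith [psi_sq]

theorem sqrt5_lt' : Real.sqrt 5 < 7/3 := by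
  nlinarith [sqrt5_sq, Real.sqrt_nonneg 5]

theorem psi_lt23 : psi < 2/3 := by unfold psi; nlinarith [sqrt5_lt']

theorem fract_lb {m y : ℕ} (h1 : 1 ≤ y) (h2 : y ≤ Nat.fib (m+2)) :
    psi^(m+2) ≤ Int.fract ((y:ℝ)*psi) := by
  have h := ba m y h1 h2 ⌊(y:ℝ)*psi⌋
  have e : (y:ℝ)*psi - (⌊(y:ℝ)*psi⌋:ℝ) = Int.fract ((y:ℝ)*psi) := Int.self_sub_floor _
  rw [e, abs_of_nonneg (Int.fract_nonneg _)] at h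
  exact h

theorem fract_ub {m y : ℕ} (h1 : 1 ≤ y) (h2 : y ≤ Nat.fib (m+2)) :
    psi^(m+2) ≤ 1 - Int.fract ((y:ℝ)*psi) := by
  have h := ba m y h1 h2 (⌊(y:ℝ)*psi⌋ + 1)
  have e : (y:ℝ)*psi - ((⌊(y:ℝ)*psi⌋ + 1 : ℤ):ℝ) = Int.fract ((y:ℝ)*psi) - 1 := by
    rw [← Int.self_sub_floor]; push_cast; ring
  rw [e, abs_of_nonpos (by linarith [Int.fract_lt_one ((y:ℝ)*psi)])] at h
  linarith

/-- The key floor-shift step. -/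
theorem floor_step {k x : ℕ} (h1 : 1 ≤ x) (h2 : x ≤ Nat.fib (k+2) + 1) :
    ⌊(x:ℝ) * psi - (-psi)^(k+3)⌋ = ⌊(x:ℝ) * psi⌋ := by
  have hppos : ∀ n : ℕ, (0:ℝ) < psi^n := fun n => pow_pos psi_pos n
  have h3le2 : psi^(k+3) < psi^(k+2) := by
    have e : psi^(k+3) = psi^(k+2)*psi := by ring
    nlinarith [hppos (k+2), psi_lt_one]
  have habs : |(-psi)^(k+3)| = psi^(k+3) := by
    rw [abs_pow, abs_neg, abs_of_nonneg psi_pos.le]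
  have hd1 : -(psi^(k+3)) ≤ -(-psi)^(k+3) :=
    neg_le_neg (habs ▸ le_abs_self ((-psi)^(k+3)))
  have hd2 : -(-psi)^(k+3) ≤ psi^(k+3) := by
    have := neg_abs_le ((-psi)^(k+3)); rw [habs] at this; linarith
  rcases le_or_gt x (Nat.fib (k+2)) with hc | hc
  · have hlb := fract_lb (m := k) h1 hc
    have hub := fract_ub (m := k) h1 hc
    have hfr : (x:ℝ)*psi = (⌊(x:ℝ)*psi⌋:ℝ) + Int.fract ((x:ℝ)*psi) := by
      rw [← Int.self_sub_floor]; ring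
    have lo : ((⌊(x:ℝ)*psi⌋:ℤ):ℝ) ≤ (x:ℝ)*psi - (-psi)^(k+3) := by linarith
    have hi : (x:ℝ)*psi - (-psi)^(k+3) < ⌊(x:ℝ)*psi⌋ + 1 := by linarith
    exact Int.floor_eq_iff.mpr ⟨lo, hi⟩
  · -- x = fib (k+2) + 1
    have hx : x = Nat.fib (k+2) + 1 := by omega
    have hfm := fib_mul_psi (k+1)
    rw [show k+1+1 = k+2 from rfl] at hfm
    have hxe : (x:ℝ)*psi = ((Nat.fib (k+1) : ℤ):ℝ) + (psi - (-psi)^(k+2)) := by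
      rw [hx]; push_cast; nlinarith [hfm]
    have hb2 : psi^(k+2) ≤ psi^2 := psi_pow_le (by omega)
    have hb3 : psi^(k+3) ≤ psi^3 := psi_pow_le (by omega)
    have ht : 0 < psi - (-psi)^(k+2) ∧ psi - (-psi)^(k+2) < 1 ∧
        0 < psi - (-psi)^(k+2) - (-psi)^(k+3) ∧ psi - (-psi)^(k+2) - (-psi)^(k+3) < 1 := by
      rcases Nat.even_or_odd (k+2) with he | ho
      · have e1 : (-psi)^(k+2) = psi^(k+2) := he.neg_pow psi
        have e2 : (-psi)^(k+3) = -psi^(k+3) := by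
          have hodd : Odd (k+3) := by
            rcases he with ⟨r, hr⟩; exact ⟨r, by omega⟩
          exact hodd.neg_pow psi
        have e3 : psi^(k+3) = psi^(k+2)*psi := by ring
        refine ⟨?_, ?_, ?_, ?_⟩ <;> simp only [e1, e2]
        · linarith [hb2, psi_sq, psi_half]
        · linarith [hppos (k+2), psi_lt_one]
        · linarith [hb2, psi_sq, psi_half, hppos (k+3)]
        · linarith [h3le2, psi_lt_one]
      · have e1 : (-psi)^(k+2) = -psi^(k+2) := ho.neg_pow psi
        have e2 : (-psi)^(k+3) = psi^(k+3) := by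
          have hev : Even (k+3) := by
            rcases ho with ⟨r, hr⟩; exact ⟨r+1, by omega⟩
          exact hev.neg_pow psi
        have hk3 : 3 ≤ k+2 := by
          rcases ho with ⟨r, hr⟩; omega
        have hb2' : psi^(k+2) ≤ psi^3 := psi_pow_le hk3
        have e3 : psi^(k+3) = psi^(k+2)*psi := by ring
        refine ⟨?_, ?_, ?_, ?_⟩ <;> simp only [e1, e2]
        · linarith [hppos (k+2), psi_pos]
        · linarith [psi_cube, hb2', psi_lt23]
        · linarith [h3le2, psi_pos, hppos (k+2)]
        · linarith [psi_cube, hb2', psi_lt23, hppos (k+3)]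
    obtain ⟨t1, t2, t3, t4⟩ := ht
    have f1 : ⌊(x:ℝ)*psi⌋ = (Nat.fib (k+1) : ℤ) := by
      rw [hxe, add_comm, Int.floor_add_intCast]
      have : ⌊psi - (-psi)^(k+2)⌋ = 0 := by
        rw [Int.floor_eq_zero_iff]; simp only [Set.mem_Ico]; constructor <;> linarith
      omega
    have f2 : ⌊(x:ℝ)*psi - (-psi)^(k+3)⌋ = (Nat.fib (k+1) : ℤ) := by
      rw [hxe, show ((Nat.fib (k+1):ℤ):ℝ) + (psi - (-psi)^(k+2)) - (-psi)^(k+3)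
          = (psi - (-psi)^(k+2) - (-psi)^(k+3)) + ((Nat.fib (k+1):ℤ):ℝ) by ring]
      rw [Int.floor_add_intCast]
      have : ⌊psi - (-psi)^(k+2) - (-psi)^(k+3)⌋ = 0 := by
        rw [Int.floor_eq_zero_iff]; simp only [Set.mem_Ico]; constructor <;> linarith
      omega
    rw [f2, f1]

theorem exists_interval : ∀ i, 3 ≤ i → ∃ m, 3 ≤ m ∧ Nat.fib m < i ∧ i ≤ Nat.fib (m+1) := by
  intro i
  induction i with
  | zero => omega
  | succ i ih =>
    intro h
    rcases lt_or_ge i 3 with h3 | h3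
    · have hi : i = 2 := by omega
      subst hi
      exact ⟨3, by omega, by decide, by decide⟩
    · obtain ⟨m, hm, h1, h2⟩ := ih h3
      rcases lt_or_ge i (Nat.fib (m+1)) with hlt | hge
      · exact ⟨m, hm, by omega, by omega⟩
      · refine ⟨m+1, by omega, by omega, ?_⟩
        have hf := Nat.fib_add_two (n := m)
        have hp : 1 ≤ Nat.fib m := Nat.fib_pos.mpr (by omega)
        rw [show m+1+1 = m+2 from rfl]
        omega

theorem key : ∀ i, 1 ≤ i →
    (goldenLetter i = true ↔ ⌊(((i+1):ℕ):ℝ) * psi⌋ = ⌊((i:ℕ):ℝ) * psi⌋ + 1) := by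
  intro i
  induction i using Nat.strong_induction_on with
  | _ i ih =>
    intro hi
    rcases lt_or_ge i 3 with h3 | h3
    · have f1 : ⌊((1:ℕ):ℝ)*psi⌋ = 0 := by
        rw [Int.floor_eq_iff]
        push_cast
        constructor <;> [linarith [psi_pos]; linarith [psi_lt_one]]
      have f2 : ⌊((2:ℕ):ℝ)*psi⌋ = 1 := by
        rw [Int.floor_eq_iff]
        push_cast
        constructor <;> [linarith [psi_half]; linarith [psi_lt23]]
      have f3 : ⌊((3:ℕ):ℝ)*psi⌋ = 1 := by
        rw [Int.floor_eq_iff]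
        push_cast
        constructor <;> [linarith [psi_half]; linarith [psi_lt23]]
      interval_cases i
      · rw [show goldenLetter 1 = true from rfl, f1, f2]; simp
      · rw [show goldenLetter 2 = false from rfl, f2, f3]; simp
    · obtain ⟨m, hm, h1, h2⟩ := exists_interval i h3
      obtain ⟨k, rfl⟩ : ∃ k, m = k+3 := ⟨m-3, by omega⟩
      rw [show k+3+1 = k+4 from rfl] at h2
      have hfib4 : Nat.fib (k+4) = Nat.fib (k+2) + Nat.fib (k+3) := by
        have := Nat.fib_add_two (n := k+2)
        rw [show k+2+2 = k+4 from rfl, show k+2+1 = k+3 from rfl] at this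
        omega
      have hsplit : ∀ y : ℕ, 1 ≤ y → y ≤ Nat.fib (k+2) + 1 →
          ⌊(((y + Nat.fib (k+3)):ℕ):ℝ)*psi⌋ = ⌊((y:ℕ):ℝ)*psi⌋ + (Nat.fib (k+2):ℤ) := by
        intro y hy1 hy2
        have hfm := fib_mul_psi (k+2)
        rw [show k+2+1 = k+3 from rfl] at hfm
        have e : (((y + Nat.fib (k+3)):ℕ):ℝ)*psi
            = ((y:ℝ)*psi - (-psi)^(k+3)) + ((Nat.fib (k+2):ℤ):ℝ) := by
          push_cast
          linarith [hfm]
        rw [e, Int.floor_add_intCast, floor_step hy1 hy2]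
      obtain ⟨x, rfl⟩ : ∃ x, i = x + Nat.fib (k+3) := ⟨i - Nat.fib (k+3), by omega⟩
      have hx1 : 1 ≤ x := by omega
      have hgl : goldenLetter (x + Nat.fib (k+3)) = goldenLetter x := by
        have := goldenLetter_step (m := k+3) (i := x + Nat.fib (k+3)) (by omega) (by omega)
          (by rw [show k+3+1 = k+4 from rfl]; omega)
        rwa [Nat.add_sub_cancel] at this
      have hfp : 1 ≤ Nat.fib (k+3) := Nat.fib_pos.mpr (by omega)
      have e1 := hsplit x hx1 (by omega)
      have e2 := hsplit (x+1) (by omega) (by omega)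
      rw [show x + Nat.fib (k+3) + 1 = (x+1) + Nat.fib (k+3) by omega]
      rw [hgl, e1, e2]
      have := ih x (by omega) hx1
      rw [this]
      omega

theorem floor_one_psi : ⌊((1:ℕ):ℝ)*psi⌋ = 0 := by
  rw [Int.floor_eq_iff]
  push_cast
  constructor
  · linarith [psi_pos]
  · linarith [psi_lt_one]

theorem count_golden : ∀ n : ℕ,
    (Nat.count (fun i => 1 ≤ i ∧ goldenLetter i = true) (n+1) : ℤ)
      = ⌊(((n+1):ℕ):ℝ) * psi⌋ := by
  intro n
  induction n with
  | zero =>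
    rw [Nat.count_succ, Nat.count_zero, if_neg (by omega), floor_one_psi]
    rfl
  | succ n ih =>
    rw [Nat.count_succ]
    have hkey := key (n+1) (by omega)
    by_cases h : goldenLetter (n+1) = true
    · rw [if_pos ⟨by omega, h⟩]
      have hk := hkey.mp h
      push_cast at ih hk ⊢
      omega
    · rw [if_neg (by intro hc; exact h hc.2)]
      have hmono : ⌊(((n+1):ℕ):ℝ)*psi⌋ ≤ ⌊(((n+1+1):ℕ):ℝ)*psi⌋ :=
        Int.floor_le_floor (by push_cast; nlinarith [psi_pos])
      have hup : ⌊(((n+1+1):ℕ):ℝ)*psi⌋ ≤ ⌊(((n+1):ℕ):ℝ)*psi⌋ + 1 := by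
        have e : (((n+1+1):ℕ):ℝ)*psi ≤ (((n+1):ℕ):ℝ)*psi + 1 := by
          push_cast; nlinarith [psi_lt_one, psi_pos]
        calc ⌊(((n+1+1):ℕ):ℝ)*psi⌋ ≤ ⌊(((n+1):ℕ):ℝ)*psi + 1⌋ := Int.floor_le_floor e
        _ = ⌊(((n+1):ℕ):ℝ)*psi⌋ + 1 := by
            rw [show (1:ℝ) = ((1:ℤ):ℝ) by norm_num, Int.floor_add_intCast]
      have hne : ¬ (⌊(((n+1+1):ℕ):ℝ)*psi⌋ = ⌊(((n+1):ℕ):ℝ)*psi⌋ + 1) :=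
        fun hc => h (hkey.mpr hc)
      omega


theorem nth_B_position (j : ℕ) (hj : 1 ≤ j) :
    ((Nat.nth (fun i => 1 ≤ i ∧ goldenLetter i = true) (j - 1) : ℤ)) =
      ⌊(j : ℝ) * ((1 + Real.sqrt 5) / 2)⌋ := by
  set x : ℝ := (j : ℝ) * ((1 + Real.sqrt 5) / 2) with hx
  have h5 : Irrational (Real.sqrt 5) := (by norm_num : Nat.Prime 5).irrational_sqrt
  have hpsi : Irrational psi := by
    have h1 : Irrational (Real.sqrt 5 - (1:ℕ)) := irrational_sub_natCast_iff.mpr h5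
    have h2 : Irrational ((Real.sqrt 5 - (1:ℕ))/(2:ℕ)) :=
      irrational_div_natCast_iff.mpr ⟨by norm_num, h1⟩
    unfold psi
    simpa using h2
  have hxirr : Irrational x := by
    have e : x = (j:ℝ)*psi + (j:ℕ) := by rw [hx]; unfold psi; push_cast; ring
    rw [e]
    exact irrational_add_natCast_iff.mpr (irrational_natCast_mul_iff.mpr ⟨by omega, hpsi⟩)
  have hphipsi : ((1 + Real.sqrt 5) / 2) * psi = 1 := by
    unfold psi; nlinarith [sqrt5_sq]
  have hxge : (1:ℝ) ≤ x := by
    rw [hx]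
    have : (1:ℝ) ≤ (j:ℝ) := by exact_mod_cast hj
    nlinarith [sqrt5_gt]
  have hfl1 : 1 ≤ ⌊x⌋ := by
    rw [Int.le_floor]; exact_mod_cast hxge
  obtain ⟨n, hn⟩ : ∃ n : ℕ, (n:ℤ) = ⌊x⌋ := ⟨⌊x⌋.toNat, Int.toNat_of_nonneg (by omega)⟩
  have hn1 : 1 ≤ n := by exact_mod_cast hn ▸ hfl1
  set θ : ℝ := x - n with hθ
  have hθ0 : 0 < θ := by
    have hne : x ≠ (⌊x⌋:ℝ) := by
      intro hc
      exact hxirr.ne_int ⌊x⌋ hc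
    have hfle : (⌊x⌋:ℝ) ≤ x := Int.floor_le x
    have : ((n:ℤ):ℝ) = (⌊x⌋:ℝ) := by exact_mod_cast hn
    rw [hθ]
    push_cast [this]
    cases lt_or_eq_of_le hfle with
    | inl hlt => push_cast at this ⊢; linarith [this ▸ hlt]
    | inr heq => exact absurd heq.symm hne
  have hθ1 : θ < 1 := by
    have := Int.lt_floor_add_one x
    have hc : ((n:ℤ):ℝ) = (⌊x⌋:ℝ) := by exact_mod_cast hn
    rw [hθ]; push_cast at hc ⊢; linarith [hc ▸ this]
  have hnψ : (n:ℝ)*psi = j - θ*psi := by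
    have : (n:ℝ) = x - θ := by rw [hθ]; ring
    rw [this, hx]
    have : ((j:ℝ) * ((1 + Real.sqrt 5) / 2)) * psi = (j:ℝ) := by
      rw [mul_assoc, hphipsi, mul_one]
    nlinarith [this]
  have hfn : ⌊((n:ℕ):ℝ)*psi⌋ = (j:ℤ) - 1 := by
    rw [Int.floor_eq_iff]
    push_cast
    rw [hnψ]
    constructor
    · nlinarith [psi_lt_one, hθ1, hθ0, psi_pos]
    · nlinarith [hθ0, psi_pos]
  have hfn1 : ⌊(((n+1):ℕ):ℝ)*psi⌋ = (j:ℤ) := by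
    rw [Int.floor_eq_iff]
    push_cast
    rw [show ((n:ℝ)+1)*psi = (n:ℝ)*psi + psi by ring, hnψ]
    constructor
    · nlinarith [hθ1, psi_pos]
    · nlinarith [hθ0, psi_lt_one, psi_pos, hθ1]
  have hgl : goldenLetter n = true := by
    rw [key n hn1]
    omega
  have hcnt : Nat.count (fun i => 1 ≤ i ∧ goldenLetter i = true) n = j - 1 := by
    have := count_golden (n-1)
    rw [show n-1+1 = n by omega] at this
    rw [hfn] at this
    omega
  have := Nat.nth_count (p := fun i => 1 ≤ i ∧ goldenLetter i = true) (n := n) ⟨hn1, hgl⟩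
  rw [hcnt] at this
  rw [this, hn]
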